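/- arXiv:2111.13306 — 5 statements merged into one kernel-verified Lean document; each statement's English description precedes it below -/
import Mathlib

section
/- Let (g,[·,·],[·,·]') be a compatible Lie algebra and (V,ρ,ρ') a representation of it, with Chevalley–Eilenberg differentials ∂ and ∂'. Let n ≥ 2 and let f, f': gⁿ → V be alternating n-linear maps satisfying ∂f = 0, ∂'f' = 0 and ∂f' + ∂'f = 0. Then the n-tuple (f, f+f', …, f+f', f') ∈ C^n_c(g,V), whose first entry is f, whose last entry is f', and whose n−2 middle entries all equal f+f', satisfies ∂_c(f, f+f', …, f+f', f') = 0, i.e. it is an n-cocycle of the compatible cochain complex. -/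
variable {K : Type*} [Field K] [CharZero K]
variable {g V : Type*} [AddCommGroup g] [Module K g] [AddCommGroup V] [Module K V]

/-- The Chevalley–Eilenberg differential on `n`-cochains `(Fin n → g) → V`. -/
def ceDiff (br : g → g → g) (ρ : g → Module.End K V) :
    (n : ℕ) → ((Fin n → g) → V) → ((Fin (n + 1) → g) → V)
  | 0, f => fun x => ρ (x 0) (f Fin.elim0)
  | n + 1, f => fun x =>
      (∑ i : Fin (n + 2), ((-1 : ℤ) ^ (i : ℕ)) • ρ (x i) (f (x ∘ i.succAbove))) +
      ∑ i : Fin (n + 2), ∑ j : Fin (n + 2),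
        if h : (i : ℕ) < (j : ℕ) then
          ((-1 : ℤ) ^ ((i : ℕ) + (j : ℕ))) •
            f (Fin.cons (br (x i) (x j)) (fun k : Fin n =>
              x (j.succAbove ((Fin.castLT i
                (lt_of_lt_of_le h (Nat.lt_succ_iff.mp j.isLt))).succAbove k))))
        else 0

/-- The differential of the compatible cochain complex:
`∂_c(f₁,…,fₙ) = (∂f₁, ∂f₂ + ∂'f₁, …, ∂fᵢ + ∂'f_{i−1}, …, ∂'fₙ)`. -/
def compDiff (br br' : g → g → g) (ρ ρ' : g → Module.End K V) (n : ℕ)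
    (F : Fin n → ((Fin n → g) → V)) : Fin (n + 1) → ((Fin (n + 1) → g) → V) :=
  fun i =>
    (if h : (i : ℕ) < n then ceDiff br ρ n (F ⟨(i : ℕ), h⟩) else 0) +
    (if h : 0 < (i : ℕ) then
        ceDiff br' ρ' n (F ⟨(i : ℕ) - 1, by have := i.isLt; omega⟩) else 0)

theorem ceDiff_add (br : g → g → g) (ρ : g →ₗ[K] Module.End K V) (n : ℕ)
    (h h' : (Fin n → g) → V) (y : Fin (n + 1) → g) :
    ceDiff br (fun u => ρ u) n (h + h') y
      = ceDiff br (fun u => ρ u) n h y + ceDiff br (fun u => ρ u) n h' y := by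
  have key : ∀ (p : Prop) [Decidable p] (a b : p → V),
      (if hp : p then a hp + b hp else 0)
        = (if hp : p then a hp else 0) + (if hp : p then b hp else 0) := by
    intros p _ a b; split <;> simp
  cases n with
  | zero => simp [ceDiff]
  | succ m =>
    simp only [ceDiff, Pi.add_apply, smul_add, map_add, key, Finset.sum_add_distrib]
    abel

/-- if `∂f = 0`, `∂'f' = 0` and `∂f' + ∂'f = 0` for alternating `n`-linear maps
`f, f' : gⁿ → V` with `n ≥ 2`, then the tuple `(f, f+f', …, f+f', f')` is an `n`-cocycle of
the compatible cochain complex. -/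
theorem stmt_4
    (B B' : g →ₗ[K] g →ₗ[K] g) (ρ ρ' : g →ₗ[K] Module.End K V)
    (hBskew : ∀ x y : g, B x y = - B y x)
    (hB'skew : ∀ x y : g, B' x y = - B' y x)
    (hBjac : ∀ x y z : g, B (B x y) z + B (B y z) x + B (B z x) y = 0)
    (hB'jac : ∀ x y z : g, B' (B' x y) z + B' (B' y z) x + B' (B' z x) y = 0)
    (hcompat : ∀ x y z : g, B (B' x y) z + B' (B x y) z
      = B (B' x z) y + B' (B x z) y + B x (B' y z) + B' x (B y z))
    (hρ : ∀ x y : g, ρ (B x y) = ρ x * ρ y - ρ y * ρ x)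
    (hρ' : ∀ x y : g, ρ' (B' x y) = ρ' x * ρ' y - ρ' y * ρ' x)
    (hmix : ∀ x y : g, ρ (B' x y) + ρ' (B x y)
      = ρ x * ρ' y - ρ' y * ρ x + ρ' x * ρ y - ρ y * ρ' x)
    (n : ℕ) (hn : 2 ≤ n) (f f' : AlternatingMap K g V (Fin n))
    (hf : ∀ x : Fin (n + 1) → g, ceDiff (fun u v => B u v) (fun u => ρ u) n ⇑f x = 0)
    (hf' : ∀ x : Fin (n + 1) → g, ceDiff (fun u v => B' u v) (fun u => ρ' u) n ⇑f' x = 0)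
    (hff' : ∀ x : Fin (n + 1) → g,
      ceDiff (fun u v => B u v) (fun u => ρ u) n ⇑f' x
        + ceDiff (fun u v => B' u v) (fun u => ρ' u) n ⇑f x = 0)
    (i : Fin (n + 1)) (x : Fin (n + 1) → g) :
    compDiff (fun u v => B u v) (fun u v => B' u v) (fun u => ρ u) (fun u => ρ' u) n
      (fun j => if (j : ℕ) = 0 then ⇑f else if (j : ℕ) = n - 1 then ⇑f' else ⇑f + ⇑f')
      i x = 0 := by
  set F := fun j : Fin n => if (j : ℕ) = 0 then ⇑f else if (j : ℕ) = n - 1 then ⇑f' else ⇑f + ⇑f'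
    with hF
  by_cases h0 : (i : ℕ) = 0
  · rw [compDiff, dif_pos (by omega : (i : ℕ) < n), dif_neg (by omega : ¬ 0 < (i : ℕ))]
    have : F ⟨(i : ℕ), by omega⟩ = ⇑f := by simp [hF, h0]
    rw [this, Pi.add_apply, Pi.zero_apply, add_zero, hf x]
  · by_cases hnn : (i : ℕ) = n
    · rw [compDiff, dif_neg (by omega : ¬ (i : ℕ) < n), dif_pos (by omega : 0 < (i : ℕ))]
      have : F ⟨(i : ℕ) - 1, by omega⟩ = ⇑f' := by
        simp only [hF]
        rw [if_neg (by omega), if_pos (by omega)]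
      rw [this, Pi.add_apply, Pi.zero_apply, zero_add, hf' x]
    · -- middle: 0 < i < n
      rw [compDiff, dif_pos (by omega : (i : ℕ) < n), dif_pos (by omega : 0 < (i : ℕ))]
      have hFi : F ⟨(i : ℕ), by omega⟩
          = (if (i : ℕ) = n - 1 then ⇑f' else ⇑f + ⇑f') := by
        simp only [hF]; rw [if_neg (by omega)]
      have hFim : F ⟨(i : ℕ) - 1, by omega⟩
          = (if (i : ℕ) - 1 = 0 then ⇑f else ⇑f + ⇑f') := by
        simp only [hF]
        rcases eq_or_ne ((i : ℕ) - 1) 0 with h | h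
        · rw [if_pos h, if_pos h]
        · rw [if_neg h, if_neg (by omega), if_neg h]
      rw [hFi, hFim, Pi.add_apply]
      by_cases hi1 : (i : ℕ) = 1
      · by_cases hn2 : n = 2
        · rw [if_pos (by omega), if_pos (by omega)]
          exact hff' x
        · rw [if_neg (by omega), if_pos (by omega),
            ceDiff_add (fun u v => B u v) ρ n ⇑f ⇑f' x]
          have := hf x; have := hff' x
          linear_combination (norm := abel) this + ‹ceDiff (fun u v => B u v) (fun u => ρ u) n ⇑f x = 0›
      · by_cases hin : (i : ℕ) = n - 1
        · rw [if_pos hin, if_neg (by omega),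
            ceDiff_add (fun u v => B' u v) ρ' n ⇑f ⇑f' x]
          have h1 := hf' x; have h2 := hff' x
          linear_combination (norm := abel) h1 + h2
        · rw [if_neg hin, if_neg (by omega),
            ceDiff_add (fun u v => B u v) ρ n ⇑f ⇑f' x,
            ceDiff_add (fun u v => B' u v) ρ' n ⇑f ⇑f' x]
          have h1 := hf x; have h2 := hf' x; have h3 := hff' x
          linear_combination (norm := abel) h1 + h2 + h3
end

section
/- Let g and V be vector spaces over a field of characteristic 0, let [·,·], [·,·]': g × g → g be skew-symmetric bilinear maps and ρ, ρ': g → End(V) linear maps. Define skew-symmetric bilinear maps Δ, Δ' on g ⊕ V with values in g ⊕ V by Δ((x,u),(y,v)) = ([x,y], ρ(x)v − ρ(y)u) and Δ'((x,u),(y,v)) = ([x,y]', ρ'(x)v − ρ'(y)u). Then (g,[·,·],[·,·]') is a compatible Lie algebra and (V,ρ,ρ') is a representation of it if and only if [Δ,Δ]_NR = 0, [Δ',Δ']_NR = 0 and [Δ,Δ']_NR = 0. -/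
/-- The Nijenhuis–Richardson bracket of two (skew-symmetric) bilinear maps, as a trilinear
map. -/
def nr3 {W : Type*} [AddCommGroup W] (μ ν : W → W → W) : W → W → W → W :=
  fun a b c =>
    μ (ν a b) c - μ (ν a c) b + μ (ν b c) a + ν (μ a b) c - ν (μ a c) b + ν (μ b c) a

/-- `(g,B,B')` is a compatible Lie algebra with representation `(V,ρ,ρ')` iff
`[Δ,Δ]_NR = 0`, `[Δ',Δ']_NR = 0` and `[Δ,Δ']_NR = 0` on `g ⊕ V`. -/
theorem stmt_8 {K : Type*} [Field K] [CharZero K]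
    {g V : Type*} [AddCommGroup g] [Module K g] [AddCommGroup V] [Module K V]
    (B B' : g →ₗ[K] g →ₗ[K] g) (ρ ρ' : g →ₗ[K] Module.End K V)
    (hBskew : ∀ x y : g, B x y = - B y x)
    (hB'skew : ∀ x y : g, B' x y = - B' y x) :
    ((∀ x y z : g, B (B x y) z + B (B y z) x + B (B z x) y = 0) ∧
     (∀ x y z : g, B' (B' x y) z + B' (B' y z) x + B' (B' z x) y = 0) ∧
     (∀ x y z : g, B (B' x y) z + B' (B x y) z
        = B (B' x z) y + B' (B x z) y + B x (B' y z) + B' x (B y z)) ∧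
     (∀ x y : g, ρ (B x y) = ρ x * ρ y - ρ y * ρ x) ∧
     (∀ x y : g, ρ' (B' x y) = ρ' x * ρ' y - ρ' y * ρ' x) ∧
     (∀ x y : g, ρ (B' x y) + ρ' (B x y)
        = ρ x * ρ' y - ρ' y * ρ x + ρ' x * ρ y - ρ y * ρ' x))
    ↔
    ((∀ p q r : g × V,
        nr3 (fun a b : g × V => (B a.1 b.1, ρ a.1 b.2 - ρ b.1 a.2))
            (fun a b : g × V => (B a.1 b.1, ρ a.1 b.2 - ρ b.1 a.2)) p q r = 0) ∧
     (∀ p q r : g × V,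
        nr3 (fun a b : g × V => (B' a.1 b.1, ρ' a.1 b.2 - ρ' b.1 a.2))
            (fun a b : g × V => (B' a.1 b.1, ρ' a.1 b.2 - ρ' b.1 a.2)) p q r = 0) ∧
     (∀ p q r : g × V,
        nr3 (fun a b : g × V => (B a.1 b.1, ρ a.1 b.2 - ρ b.1 a.2))
            (fun a b : g × V => (B' a.1 b.1, ρ' a.1 b.2 - ρ' b.1 a.2)) p q r = 0)) := by
  constructor
  · rintro ⟨h1, h2, h3, h4, h5, h6⟩
    have e4 : ∀ (x y : g) (w : V), ρ (B x y) w = ρ x (ρ y w) - ρ y (ρ x w) := by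
      intro x y w
      simpa [Module.End.mul_apply] using DFunLike.congr_fun (h4 x y) w
    have e5 : ∀ (x y : g) (w : V), ρ' (B' x y) w = ρ' x (ρ' y w) - ρ' y (ρ' x w) := by
      intro x y w
      simpa [Module.End.mul_apply] using DFunLike.congr_fun (h5 x y) w
    have e6 : ∀ (x y : g) (w : V), ρ (B' x y) w + ρ' (B x y) w
        = ρ x (ρ' y w) - ρ' y (ρ x w) + ρ' x (ρ y w) - ρ y (ρ' x w) := by
      intro x y w
      simpa [Module.End.mul_apply] using DFunLike.congr_fun (h6 x y) w
    refine ⟨?_, ?_, ?_⟩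
    · rintro ⟨x, u⟩ ⟨y, v⟩ ⟨z, w⟩
      simp only [nr3, Prod.ext_iff, Prod.fst_add, Prod.snd_add, Prod.fst_sub, Prod.snd_sub,
        Prod.fst_zero, Prod.snd_zero, map_sub, map_add]
      constructor
      · have hs : B (B z x) y = - B (B x z) y := by rw [hBskew z x, map_neg, LinearMap.neg_apply]
        linear_combination (norm := module) (2:K) • h1 x y z - (2:K) • hs
      · linear_combination (norm := module) (2:K) • e4 x y w - (2:K) • e4 x z v + (2:K) • e4 y z u
    · rintro ⟨x, u⟩ ⟨y, v⟩ ⟨z, w⟩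
      simp only [nr3, Prod.ext_iff, Prod.fst_add, Prod.snd_add, Prod.fst_sub, Prod.snd_sub,
        Prod.fst_zero, Prod.snd_zero, map_sub, map_add]
      constructor
      · have hs : B' (B' z x) y = - B' (B' x z) y := by
          rw [hB'skew z x, map_neg, LinearMap.neg_apply]
        linear_combination (norm := module) (2:K) • h2 x y z - (2:K) • hs
      · linear_combination (norm := module) (2:K) • e5 x y w - (2:K) • e5 x z v + (2:K) • e5 y z u
    · rintro ⟨x, u⟩ ⟨y, v⟩ ⟨z, w⟩
      simp only [nr3, Prod.ext_iff, Prod.fst_add, Prod.snd_add, Prod.fst_sub, Prod.snd_sub,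
        Prod.fst_zero, Prod.snd_zero, map_sub, map_add]
      constructor
      · have hs1 : B (B' y z) x = - B x (B' y z) := hBskew _ _
        have hs2 : B' (B y z) x = - B' x (B y z) := hB'skew _ _
        linear_combination (norm := module) h3 x y z + hs1 + hs2
      · linear_combination (norm := module) e6 x y w - e6 x z v + e6 y z u
  · rintro ⟨n1, n2, n3⟩
    have halfg : ∀ m : g, (2:K) • m = 0 → m = 0 := by
      intro m hm
      have := congrArg (fun a => (2:K)⁻¹ • a) hm
      simpa [smul_smul] using this
    have halfV : ∀ m : V, (2:K) • m = 0 → m = 0 := by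
      intro m hm
      have := congrArg (fun a => (2:K)⁻¹ • a) hm
      simpa [smul_smul] using this
    refine ⟨?_, ?_, ?_, ?_, ?_, ?_⟩
    · intro x y z
      have t := n1 (x, 0) (y, 0) (z, 0)
      simp only [nr3, Prod.ext_iff, Prod.fst_add, Prod.snd_add, Prod.fst_sub, Prod.snd_sub,
        Prod.fst_zero, Prod.snd_zero, map_zero, LinearMap.zero_apply, sub_zero, zero_sub,
        map_sub, map_add, map_neg, LinearMap.neg_apply, add_zero, zero_add, neg_zero,
        sub_self, and_true, true_and] at t
      have hs : B (B z x) y = - B (B x z) y := by rw [hBskew z x, map_neg, LinearMap.neg_apply]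
      refine halfg _ ?_
      linear_combination (norm := module) t + (2:K) • hs
    · intro x y z
      have t := n2 (x, 0) (y, 0) (z, 0)
      simp only [nr3, Prod.ext_iff, Prod.fst_add, Prod.snd_add, Prod.fst_sub, Prod.snd_sub,
        Prod.fst_zero, Prod.snd_zero, map_zero, LinearMap.zero_apply, sub_zero, zero_sub,
        map_sub, map_add, map_neg, LinearMap.neg_apply, add_zero, zero_add, neg_zero,
        sub_self, and_true, true_and] at t
      have hs : B' (B' z x) y = - B' (B' x z) y := by
        rw [hB'skew z x, map_neg, LinearMap.neg_apply]
      refine halfg _ ?_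
      linear_combination (norm := module) t + (2:K) • hs
    · intro x y z
      have t := n3 (x, 0) (y, 0) (z, 0)
      simp only [nr3, Prod.ext_iff, Prod.fst_add, Prod.snd_add, Prod.fst_sub, Prod.snd_sub,
        Prod.fst_zero, Prod.snd_zero, map_zero, LinearMap.zero_apply, sub_zero, zero_sub,
        map_sub, map_add, map_neg, LinearMap.neg_apply, add_zero, zero_add, neg_zero,
        sub_self, and_true, true_and] at t
      have hs1 : B (B' y z) x = - B x (B' y z) := hBskew _ _
      have hs2 : B' (B y z) x = - B' x (B y z) := hB'skew _ _
      linear_combination (norm := module) t - hs1 - hs2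
    · intro x y
      ext w
      simp only [Module.End.mul_apply, LinearMap.sub_apply]
      have t := n1 (x, 0) (y, 0) (0, w)
      simp only [nr3, Prod.ext_iff, Prod.fst_add, Prod.snd_add, Prod.fst_sub, Prod.snd_sub,
        Prod.fst_zero, Prod.snd_zero, map_zero, LinearMap.zero_apply, sub_zero, zero_sub,
        map_sub, map_add, map_neg, LinearMap.neg_apply, add_zero, zero_add, neg_zero,
        sub_self, and_true, true_and] at t
      have hw : ρ (B x y) w - (ρ x (ρ y w) - ρ y (ρ x w)) = 0 := by
        refine halfV _ ?_
        linear_combination (norm := module) t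
      linear_combination (norm := module) hw
    · intro x y
      ext w
      simp only [Module.End.mul_apply, LinearMap.sub_apply]
      have t := n2 (x, 0) (y, 0) (0, w)
      simp only [nr3, Prod.ext_iff, Prod.fst_add, Prod.snd_add, Prod.fst_sub, Prod.snd_sub,
        Prod.fst_zero, Prod.snd_zero, map_zero, LinearMap.zero_apply, sub_zero, zero_sub,
        map_sub, map_add, map_neg, LinearMap.neg_apply, add_zero, zero_add, neg_zero,
        sub_self, and_true, true_and] at t
      have hw : ρ' (B' x y) w - (ρ' x (ρ' y w) - ρ' y (ρ' x w)) = 0 := by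
        refine halfV _ ?_
        linear_combination (norm := module) t
      linear_combination (norm := module) hw
    · intro x y
      ext w
      simp only [Module.End.mul_apply, LinearMap.sub_apply, LinearMap.add_apply]
      have t := n3 (x, 0) (y, 0) (0, w)
      simp only [nr3, Prod.ext_iff, Prod.fst_add, Prod.snd_add, Prod.fst_sub, Prod.snd_sub,
        Prod.fst_zero, Prod.snd_zero, map_zero, LinearMap.zero_apply, sub_zero, zero_sub,
        map_sub, map_add, map_neg, LinearMap.neg_apply, add_zero, zero_add, neg_zero,
        sub_self, and_true, true_and] at t
      linear_combination (norm := module) t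
end

section
/- Let g and V be vector spaces over a field of characteristic 0, let [·,·]: g × g → g be a skew-symmetric bilinear map and ρ: g → End(V) a linear map, and let R: V → g be a linear map. Define the skew-symmetric bilinear map Δ on g ⊕ V by Δ((x,u),(y,v)) = ([x,y], ρ(x)v − ρ(y)u), and the linear map R̂ on g ⊕ V by R̂(x,u) = (R(u), 0). Then for all v, w ∈ V: [[Δ,R̂]_NR, R̂]_NR((0,v),(0,w)) = ( 2[R(v),R(w)] − 2R(ρ(R(v))w) + 2R(ρ(R(w))v), 0 ). -/
/-- The Nijenhuis–Richardson bracket of a skew-symmetric bilinear map `B` and a linear map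
`N`: `[B,N]_NR(a,b) = B(N(a),b) − B(N(b),a) − N(B(a,b))`. -/
def nr2 {W : Type*} [AddCommGroup W] (B : W → W → W) (N : W → W) : W → W → W :=
  fun a b => B (N a) b - B (N b) a - N (B a b)

/-- the explicit formula for `[[Δ,R̂]_NR, R̂]_NR((0,v),(0,w))` on `g ⊕ V`,
where `Δ((x,u),(y,v)) = ([x,y], ρ(x)v − ρ(y)u)` and `R̂(x,u) = (R(u),0)`. -/
theorem stmt_9 {K : Type*} [Field K] [CharZero K]
    {g V : Type*} [AddCommGroup g] [Module K g] [AddCommGroup V] [Module K V]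
    (B : g →ₗ[K] g →ₗ[K] g) (ρ : g →ₗ[K] Module.End K V) (R : V →ₗ[K] g)
    (hBskew : ∀ x y : g, B x y = - B y x) :
    ∀ v w : V,
      nr2 (nr2 (fun p q : g × V => (B p.1 q.1, ρ p.1 q.2 - ρ q.1 p.2))
            (fun p : g × V => (R p.2, 0)))
          (fun p : g × V => (R p.2, 0)) ((0 : g), v) ((0 : g), w)
        = (2 • B (R v) (R w) - 2 • R (ρ (R v) w) + 2 • R (ρ (R w) v), (0 : V)) := by
  intro v w
  simp only [nr2, Prod.mk_sub_mk, Prod.mk_add_mk, map_zero, map_sub, Prod.fst_sub, Prod.snd_sub,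
    LinearMap.zero_apply, LinearMap.sub_apply]
  have h := hBskew (R w) (R v)
  rw [Prod.ext_iff]; constructor <;> simp [h] <;> abel
end

section
/- Let (g,[·,·],[·,·]') be a compatible Lie algebra and (V,ρ,ρ') a representation of it. Define the skew-symmetric bilinear maps Δ, Δ' on g ⊕ V by Δ((x,u),(y,v)) = ([x,y], ρ(x)v − ρ(y)u) and Δ'((x,u),(y,v)) = ([x,y]', ρ'(x)v − ρ'(y)u), and for a linear map R: V → g let R̂(x,u) = (R(u),0). Then R is a relative Rota–Baxter operator if and only if [[Δ,R̂]_NR, R̂]_NR((0,v),(0,w)) = 0 and [[Δ',R̂]_NR, R̂]_NR((0,v),(0,w)) = 0 for all v, w ∈ V. -/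
/-- Key computation: the double Nijenhuis–Richardson bracket condition at `((0,v),(0,w))`
is equivalent to the relative Rota–Baxter identity for a single bracket. -/
theorem key_nr2 {K : Type*} [Field K] [CharZero K]
    {g V : Type*} [AddCommGroup g] [Module K g] [AddCommGroup V] [Module K V]
    (B : g →ₗ[K] g →ₗ[K] g) (ρ : g →ₗ[K] Module.End K V)
    (hBskew : ∀ x y : g, B x y = - B y x) (R : V →ₗ[K] g) (v w : V) :
    nr2 (nr2 (fun p q : g × V => (B p.1 q.1, ρ p.1 q.2 - ρ q.1 p.2))
          (fun p : g × V => (R p.2, 0)))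
        (fun p : g × V => (R p.2, 0)) ((0 : g), v) ((0 : g), w) = 0
    ↔ B (R v) (R w) = R (ρ (R v) w - ρ (R w) v) := by
  simp only [nr2, Prod.mk_sub_mk, Prod.ext_iff, Prod.fst, Prod.snd, map_zero, map_sub,
    LinearMap.zero_apply, LinearMap.sub_apply, Prod.zero_eq_mk, sub_zero, zero_sub]
  rw [hBskew (R w) (R v)]
  constructor
  · rintro ⟨h, -⟩
    have h2 : (2:K) • ((B (R v)) (R w) - (R (ρ (R v) w) - R (ρ (R w) v))) = 0 := by
      rw [two_smul]; abel_nf; abel_nf at h; exact h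
    have h3 := (smul_eq_zero.mp h2).resolve_left two_ne_zero
    exact sub_eq_zero.mp h3
  · intro h
    refine ⟨?_, trivial⟩
    rw [h]
    abel

/-- for a compatible Lie algebra `(g,B,B')` with representation `(V,ρ,ρ')`, a
linear map `R : V → g` is a relative Rota–Baxter operator iff
`[[Δ,R̂]_NR,R̂]_NR((0,v),(0,w)) = 0` and `[[Δ',R̂]_NR,R̂]_NR((0,v),(0,w)) = 0` for all
`v, w ∈ V`. -/
theorem stmt_10 {K : Type*} [Field K] [CharZero K]
    {g V : Type*} [AddCommGroup g] [Module K g] [AddCommGroup V] [Module K V]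
    (B B' : g →ₗ[K] g →ₗ[K] g) (ρ ρ' : g →ₗ[K] Module.End K V)
    (hBskew : ∀ x y : g, B x y = - B y x)
    (hB'skew : ∀ x y : g, B' x y = - B' y x)
    (hBjac : ∀ x y z : g, B (B x y) z + B (B y z) x + B (B z x) y = 0)
    (hB'jac : ∀ x y z : g, B' (B' x y) z + B' (B' y z) x + B' (B' z x) y = 0)
    (hcompat : ∀ x y z : g, B (B' x y) z + B' (B x y) z
      = B (B' x z) y + B' (B x z) y + B x (B' y z) + B' x (B y z))
    (hρ : ∀ x y : g, ρ (B x y) = ρ x * ρ y - ρ y * ρ x)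
    (hρ' : ∀ x y : g, ρ' (B' x y) = ρ' x * ρ' y - ρ' y * ρ' x)
    (hmix : ∀ x y : g, ρ (B' x y) + ρ' (B x y)
      = ρ x * ρ' y - ρ' y * ρ x + ρ' x * ρ y - ρ y * ρ' x)
    (R : V →ₗ[K] g) :
    ((∀ v w : V, B (R v) (R w) = R (ρ (R v) w - ρ (R w) v)) ∧
     (∀ v w : V, B' (R v) (R w) = R (ρ' (R v) w - ρ' (R w) v)))
    ↔
    ((∀ v w : V,
        nr2 (nr2 (fun p q : g × V => (B p.1 q.1, ρ p.1 q.2 - ρ q.1 p.2))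
              (fun p : g × V => (R p.2, 0)))
            (fun p : g × V => (R p.2, 0)) ((0 : g), v) ((0 : g), w) = 0) ∧
     (∀ v w : V,
        nr2 (nr2 (fun p q : g × V => (B' p.1 q.1, ρ' p.1 q.2 - ρ' q.1 p.2))
              (fun p : g × V => (R p.2, 0)))
            (fun p : g × V => (R p.2, 0)) ((0 : g), v) ((0 : g), w) = 0)) := by
  constructor
  · rintro ⟨h1, h2⟩
    exact ⟨fun v w => (key_nr2 B ρ hBskew R v w).mpr (h1 v w),
           fun v w => (key_nr2 B' ρ' hB'skew R v w).mpr (h2 v w)⟩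
  · rintro ⟨h1, h2⟩
    exact ⟨fun v w => (key_nr2 B ρ hBskew R v w).mp (h1 v w),
           fun v w => (key_nr2 B' ρ' hB'skew R v w).mp (h2 v w)⟩
end

section
/- Let (g, h, t, t', α, α') be a crossed module of compatible Lie algebras. Set L₋₁ = g and L₀ = h, and define l₁ = t, l₁' = t', l₂(x,y) = [x,y]_h, l₂'(x,y) = [x,y]'_h for x,y ∈ h, and l₂(x,m) = −l₂(m,x) := α(x,m), l₂'(x,m) = −l₂'(m,x) := α'(x,m) for x ∈ h, m ∈ g, together with l₃ = l₃' = 0. Then (L₋₁ ⊕ L₀, {l₁, l₂, 0}, {l₁', l₂', 0}) is a strict 2-term compatible L∞-algebra. -/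
variable {K : Type*} [Field K] [CharZero K]
variable {A M : Type*} [AddCommGroup A] [Module K A] [AddCommGroup M] [Module K M]

/-- A 2-term L∞-algebra structure on `L₋₁ ⊕ L₀` with `L₋₁ = A`, `L₀ = M`:
`d = l₁ : A → M`, `b = l₂ : M × M → M` (skew-symmetric), `a = l₂ : M × A → A` (with the
convention `l₂(h,x) = −l₂(x,h) = −a x h`), and `t = l₃ : M³ → A` (alternating), subject to
the axioms (L1)–(L5). -/
structure IsL2 (d : A →ₗ[K] M) (b : M →ₗ[K] M →ₗ[K] M)
    (a : M →ₗ[K] A →ₗ[K] A) (t : M →ₗ[K] M →ₗ[K] M →ₗ[K] A) : Prop where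
  b_skew : ∀ x y : M, b x y = - b y x
  t_skew12 : ∀ x y z : M, t x y z = - t y x z
  t_skew23 : ∀ x y z : M, t x y z = - t x z y
  L1 : ∀ (x : M) (h : A), d (a x h) = b x (d h)
  L2 : ∀ h k : A, a (d h) k = - a (d k) h
  L3 : ∀ x y z : M, d (t x y z) = - b (b x y) z + b (b x z) y + b x (b y z)
  L4 : ∀ (h : A) (x y : M),
    t (d h) x y = - a (b x y) h - a y (a x h) + a x (a y h)
  L5 : ∀ w x y z : M,
    - a z (t w x y) - a x (t w y z) + a y (t w x z) + a w (t x y z)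
      = t (b w x) y z - t (b w y) x z + t (b w z) x y
        + t (b x y) w z - t (b x z) w y + t (b y z) w x

/-- The compatibility conditions (C1)–(C5) between two 2-term L∞-algebra structures
`(d,b,a,t)` and `(d',b',a',t')` on `L₋₁ ⊕ L₀` (with the convention
`l₂(h,x) = −a x h`, `l₂'(h,x) = −a' x h`). -/
structure IsCompat2 (d d' : A →ₗ[K] M) (b b' : M →ₗ[K] M →ₗ[K] M)
    (a a' : M →ₗ[K] A →ₗ[K] A) (t t' : M →ₗ[K] M →ₗ[K] M →ₗ[K] A) : Prop where
  C1 : ∀ (x : M) (h : A), d (a' x h) + d' (a x h) = b x (d' h) + b' x (d h)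
  C2 : ∀ h k : A, a (d' h) k + a' (d h) k = - a (d' k) h - a' (d k) h
  C3 : ∀ x y z : M, d (t' x y z) + d' (t x y z)
    = - b (b' x y) z - b' (b x y) z + b (b' x z) y + b' (b x z) y
      + b x (b' y z) + b' x (b y z)
  C4 : ∀ (h : A) (x y : M),
    t (d' h) x y + t' (d h) x y
      = - a (b' x y) h - a' (b x y) h - a y (a' x h) - a' y (a x h)
        + a x (a' y h) + a' x (a y h)
  C5 : ∀ w x y z : M,
    - a z (t' w x y) - a' z (t w x y) - a x (t' w y z) - a' x (t w y z)
      + a y (t' w x z) + a' y (t w x z) + a w (t' x y z) + a' w (t x y z)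
      = t (b' w x) y z + t' (b w x) y z - t (b' w y) x z - t' (b w y) x z
        + t (b' w z) x y + t' (b w z) x y + t (b' x y) w z + t' (b x y) w z
        - t (b' x z) w y - t' (b x z) w y + t (b' y z) w x + t' (b y z) w x

/-- A compatible Lie algebra structure: two skew-symmetric brackets, each satisfying the
Jacobi identity, satisfying the compatibility condition. -/
structure IsCompatLie {X : Type*} [AddCommGroup X] [Module K X]
    (B B' : X →ₗ[K] X →ₗ[K] X) : Prop where
  skew : ∀ x y : X, B x y = - B y x
  skew' : ∀ x y : X, B' x y = - B' y x
  jacobi : ∀ x y z : X, B (B x y) z + B (B y z) x + B (B z x) y = 0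
  jacobi' : ∀ x y z : X, B' (B' x y) z + B' (B' y z) x + B' (B' z x) y = 0
  compat : ∀ x y z : X, B (B' x y) z + B' (B x y) z
    = B (B' x z) y + B' (B x z) y + B x (B' y z) + B' x (B y z)

/-- A crossed module of compatible Lie algebras: compatible Lie algebras
`(A, bA, bA')` and `(M, bM, bM')`, Lie algebra homomorphisms `tm : (A,bA) → (M,bM)` and
`tm' : (A,bA') → (M,bM')`, and bilinear maps `α, α' : M × A → A` satisfying (i)–(iv). -/
structure IsCrossedModule (bA bA' : A →ₗ[K] A →ₗ[K] A) (bM bM' : M →ₗ[K] M →ₗ[K] M)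
    (tm tm' : A →ₗ[K] M) (α α' : M →ₗ[K] A →ₗ[K] A) : Prop where
  compatA : IsCompatLie bA bA'
  compatM : IsCompatLie bM bM'
  t_hom : ∀ m n : A, tm (bA m n) = bM (tm m) (tm n)
  t'_hom : ∀ m n : A, tm' (bA' m n) = bM' (tm' m) (tm' n)
  i1 : ∀ (x : M) (m : A), tm (α x m) = bM x (tm m)
  i2 : ∀ (x : M) (m : A), tm' (α' x m) = bM' x (tm' m)
  i3 : ∀ (x : M) (m : A), tm (α' x m) + tm' (α x m) = bM x (tm' m) + bM' x (tm m)
  ii1 : ∀ m n : A, α (tm m) n = bA m n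
  ii2 : ∀ m n : A, α' (tm' m) n = bA' m n
  ii3 : ∀ m n : A, α (tm' m) n + α' (tm m) n = - α (tm' n) m - α' (tm n) m
  iii1 : ∀ (x : M) (m n : A), α x (bA m n) = bA (α x m) n + bA m (α x n)
  iii2 : ∀ (x : M) (m n : A), α' x (bA' m n) = bA' (α' x m) n + bA' m (α' x n)
  iii3 : ∀ (x : M) (m n : A), α x (bA' m n) + α' x (bA m n)
    = bA' (α x m) n + bA (α' x m) n + bA' m (α x n) + bA m (α' x n)
  iv1 : ∀ (x y : M) (m : A), α (bM x y) m = α x (α y m) - α y (α x m)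
  iv2 : ∀ (x y : M) (m : A), α' (bM' x y) m = α' x (α' y m) - α' y (α' x m)
  iv3 : ∀ (x y : M) (m : A), α (bM' x y) m + α' (bM x y) m
    = α x (α' y m) + α' x (α y m) - α y (α' x m) - α' y (α x m)

/-- a crossed module of compatible Lie algebras gives rise to a strict 2-term
compatible L∞-algebra with `l₁ = tm`, `l₁' = tm'`, `l₂ = bM` and `α` on mixed arguments,
`l₂' = bM'` and `α'` on mixed arguments, and `l₃ = l₃' = 0`. -/
theorem stmt_13 (bA bA' : A →ₗ[K] A →ₗ[K] A) (bM bM' : M →ₗ[K] M →ₗ[K] M)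
    (tm tm' : A →ₗ[K] M) (α α' : M →ₗ[K] A →ₗ[K] A)
    (hX : IsCrossedModule bA bA' bM bM' tm tm' α α') :
    IsL2 tm bM α 0 ∧ IsL2 tm' bM' α' 0 ∧ IsCompat2 tm tm' bM bM' α α' 0 0 := by

  have jac3 : ∀ (B : M →ₗ[K] M →ₗ[K] M), (∀ x y : M, B x y = - B y x) →
      (∀ x y z : M, B (B x y) z + B (B y z) x + B (B z x) y = 0) →
      ∀ x y z : M, (0 : M) = - B (B x y) z + B (B x z) y + B x (B y z) := by
    intro B hs hj x y z
    have e1 : B (B x z) y = - B (B z x) y := by rw [hs x z]; simp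
    have e2 : B x (B y z) = - B (B y z) x := hs x (B y z)
    have j := hj x y z
    rw [e1, e2]
    linear_combination (norm := abel1) j
  refine ⟨⟨hX.compatM.skew, by simp, by simp, hX.i1, ?_, ?_, ?_, by simp⟩,
          ⟨hX.compatM.skew', by simp, by simp, hX.i2, ?_, ?_, ?_, by simp⟩,
          ⟨hX.i3, hX.ii3, ?_, ?_, by simp⟩⟩
  · intro h k
    rw [hX.ii1, hX.ii1, hX.compatA.skew]
  · intro x y z
    simpa using jac3 bM hX.compatM.skew hX.compatM.jacobi x y z
  · intro h x y
    simp only [LinearMap.zero_apply, hX.iv1]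
    abel
  · intro h k
    rw [hX.ii2, hX.ii2, hX.compatA.skew']
  · intro x y z
    simpa using jac3 bM' hX.compatM.skew' hX.compatM.jacobi' x y z
  · intro h x y
    simp only [LinearMap.zero_apply, hX.iv2]
    abel
  · intro x y z
    have c := hX.compatM.compat x y z
    simp only [map_zero, LinearMap.zero_apply]
    linear_combination (norm := abel1) c
  · intro h x y
    have c := hX.iv3 x y h
    simp only [LinearMap.zero_apply]
    linear_combination (norm := abel1) c
end
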